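/- Let X = (X₁,…,Xₙ) and Y = (Y₁,…,Yₙ) be random vectors with a common copula C. If Xᵢ ≤_st Yᵢ for each i = 1,…,n, then X₁ + ⋯ + Xₙ ≤_st Y₁ + ⋯ + Yₙ. -/

import Mathlib

open MeasureTheory ProbabilityTheory Set

noncomputable section

variable {Ω Ω' : Type*} [MeasurableSpace Ω] [MeasurableSpace Ω']

/-- Distribution function of a random variable. -/
def distFun (μ : Measure Ω) (X : Ω → ℝ) (x : ℝ) : ℝ := (μ {ω | X ω ≤ x}).toReal

/-- Value-at-Risk at level α: `VaR_α(X) = inf {x | F_X(x) ≥ 1-α}`. -/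
def VaR (μ : Measure Ω) (X : Ω → ℝ) (α : ℝ) : ℝ := sInf {x | 1 - α ≤ distFun μ X x}

/-- Range-Value-at-Risk with parameters α, β (for β > 0). -/
def RVaR (μ : Measure Ω) (X : Ω → ℝ) (α β : ℝ) : ℝ := (1/β) * ∫ s in α..(α+β), VaR μ X s

/-- Usual stochastic order. -/
def le_st (μ : Measure Ω) (X : Ω → ℝ) (ν : Measure Ω') (Y : Ω' → ℝ) : Prop :=
  ∀ f : ℝ → ℝ, Monotone f → Integrable (fun ω => f (X ω)) μ →
    Integrable (fun ω => f (Y ω)) ν → ∫ ω, f (X ω) ∂μ ≤ ∫ ω, f (Y ω) ∂ν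

/-- Convex order. -/
def le_cx (μ : Measure Ω) (X : Ω → ℝ) (ν : Measure Ω') (Y : Ω' → ℝ) : Prop :=
  ∀ f : ℝ → ℝ, ConvexOn ℝ univ f → Integrable (fun ω => f (X ω)) μ →
    Integrable (fun ω => f (Y ω)) ν → ∫ ω, f (X ω) ∂μ ≤ ∫ ω, f (Y ω) ∂ν

/-- Increasing convex order. -/
def le_icx (μ : Measure Ω) (X : Ω → ℝ) (ν : Measure Ω') (Y : Ω' → ℝ) : Prop :=
  ∀ f : ℝ → ℝ, Monotone f → ConvexOn ℝ univ f → Integrable (fun ω => f (X ω)) μ →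
    Integrable (fun ω => f (Y ω)) ν → ∫ ω, f (X ω) ∂μ ≤ ∫ ω, f (Y ω) ∂ν

/-- Admissible ceded loss functions: `0 ≤ f(x) ≤ x` with both `f` and the
retained loss `x - f(x)` increasing. -/
def Ceded (f : ℝ → ℝ) : Prop :=
  Monotone f ∧ Monotone (fun x => x - f x) ∧ ∀ x, 0 ≤ x → 0 ≤ f x ∧ f x ≤ x

/-- Layer reinsurance treaty with deductible `a` and upper bound `b`. -/
def layer (a b x : ℝ) : ℝ := min (max (x - a) 0) b

/-- Joint distribution function of a random vector. -/
def jointCDF {n : ℕ} (μ : Measure Ω) (X : Fin n → Ω → ℝ) (x : Fin n → ℝ) : ℝ :=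
  (μ {ω | ∀ i, X i ω ≤ x i}).toReal

/-- All one-dimensional marginals are uniform on [0,1]. -/
def uniformMarginals {n : ℕ} (ν : Measure (Fin n → ℝ)) : Prop :=
  ∀ i, Measure.map (fun u => u i) ν = volume.restrict (Icc (0:ℝ) 1)

/-- `C` is (the distribution function of) an `n`-dimensional copula. -/
def IsCopula {n : ℕ} (C : (Fin n → ℝ) → ℝ) : Prop :=
  ∃ ν : Measure (Fin n → ℝ), IsProbabilityMeasure ν ∧ uniformMarginals ν ∧
    ∀ x, C x = (ν {u | ∀ i, u i ≤ x i}).toReal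

/-- `C` is a copula of the random vector `X`. -/
def HasCopula {n : ℕ} (μ : Measure Ω) (X : Fin n → Ω → ℝ) (C : (Fin n → ℝ) → ℝ) : Prop :=
  IsCopula C ∧ ∀ x : Fin n → ℝ, jointCDF μ X x = C (fun i => distFun μ (X i) (x i))

/-- Positively dependent through the stochastic ordering: for each `i`,
`E[f(X_{-i}) | X_i = x]` is increasing in `x` for every componentwise increasing `f`
(not depending on coordinate `i`). -/
def PDS {n : ℕ} (μ : Measure Ω) (X : Fin n → Ω → ℝ) : Prop :=
  ∀ i : Fin n, ∀ f : (Fin n → ℝ) → ℝ, Monotone f →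
    (∀ a b : Fin n → ℝ, (∀ j, j ≠ i → a j = b j) → f a = f b) →
    ∃ g : ℝ → ℝ, Monotone g ∧
      (μ[(fun ω => f (fun j => X j ω)) | MeasurableSpace.comap (X i) (borel ℝ)]
        =ᵐ[μ] fun ω => g (X i ω))

/-- `C` is a PDS copula. -/
def IsPDSCopula {n : ℕ} (C : (Fin n → ℝ) → ℝ) : Prop :=
  ∃ ν : Measure (Fin n → ℝ), IsProbabilityMeasure ν ∧ uniformMarginals ν ∧
    (∀ x, C x = (ν {u | ∀ i, u i ≤ x i}).toReal) ∧ PDS ν (fun i u => u i)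

/-- Positive orthant dependence. -/
def POD {n : ℕ} (μ : Measure Ω) (X : Fin n → Ω → ℝ) : Prop :=
  ∀ x : Fin n → ℝ,
    (∏ i, (μ {ω | X i ω ≤ x i}).toReal) ≤ (μ {ω | ∀ i, X i ω ≤ x i}).toReal ∧
    (∏ i, (μ {ω | x i < X i ω}).toReal) ≤ (μ {ω | ∀ i, x i < X i ω}).toReal

/-- A comonotone random vector. -/
def Comonotone {m : ℕ} (Z : Fin m → Ω → ℝ) : Prop :=
  ∀ i j ω ω', 0 ≤ (Z i ω - Z i ω') * (Z j ω - Z j ω')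


open Filter Topology in
lemma aux_distFun_mono (μ : Measure Ω) [IsProbabilityMeasure μ] (X : Ω → ℝ) :
    Monotone (distFun μ X) := fun _a _b hab =>
  ENNReal.toReal_mono (measure_ne_top μ _) (measure_mono fun _ω h => le_trans h hab)

open Filter Topology in
lemma aux_exists_distFun_lt (μ : Measure Ω) [IsProbabilityMeasure μ] {X : Ω → ℝ}
    (hXm : Measurable X) {u : ℝ} (hu : 0 < u) : ∃ x : ℝ, distFun μ X x < u := by
  have hanti : Antitone fun k : ℕ => {ω | X ω ≤ -(k : ℝ)} := by
    intro k k' hkk' ω (h : X ω ≤ -(k' : ℝ))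
    exact h.trans (neg_le_neg (by exact_mod_cast hkk'))
  have hempty : (⋂ k : ℕ, {ω | X ω ≤ -(k : ℝ)}) = ∅ := by
    ext ω
    simp only [Set.mem_iInter, Set.mem_setOf_eq, Set.mem_empty_iff_false, iff_false, not_forall]
    obtain ⟨k, hk⟩ := exists_nat_gt (-X ω)
    exact ⟨k, by push_neg; linarith⟩
  have ht := tendsto_measure_iInter_atTop (μ := μ) (s := fun k : ℕ => {ω | X ω ≤ -(k : ℝ)})
    (fun k => ((hXm measurableSet_Iic : MeasurableSet {ω | X ω ≤ -(k : ℝ)})).nullMeasurableSet)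
    hanti ⟨0, measure_ne_top μ _⟩
  rw [hempty, measure_empty] at ht
  have hev : ∀ᶠ k : ℕ in atTop, μ {ω | X ω ≤ -(k : ℝ)} < ENNReal.ofReal u :=
    ht.eventually (eventually_lt_nhds (by simpa using ENNReal.ofReal_pos.2 hu))
  obtain ⟨k, hk⟩ := hev.exists
  exact ⟨-(k : ℝ), (ENNReal.lt_ofReal_iff_toReal_lt (measure_ne_top μ _)).1 hk⟩

open Filter Topology in
lemma aux_exists_le_distFun (μ : Measure Ω) [IsProbabilityMeasure μ] {X : Ω → ℝ}
    {u : ℝ} (hu : u < 1) : ∃ x : ℝ, u ≤ distFun μ X x := by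
  have hmono : Monotone fun k : ℕ => {ω | X ω ≤ (k : ℝ)} := by
    intro k k' hkk' ω (h : X ω ≤ (k : ℝ))
    exact h.trans (by exact_mod_cast hkk')
  have huniv : (⋃ k : ℕ, {ω | X ω ≤ (k : ℝ)}) = Set.univ := by
    ext ω
    simp only [Set.mem_iUnion, Set.mem_setOf_eq, Set.mem_univ, iff_true]
    exact exists_nat_ge (X ω)
  have ht := tendsto_measure_iUnion_atTop (μ := μ)
    (s := fun k : ℕ => {ω | X ω ≤ (k : ℝ)}) hmono
  rw [huniv, measure_univ] at ht
  have hev : ∀ᶠ k : ℕ in atTop, ENNReal.ofReal u < μ {ω | X ω ≤ (k : ℝ)} :=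
    ht.eventually (eventually_gt_nhds (ENNReal.ofReal_lt_one.2 hu))
  obtain ⟨k, hk⟩ := hev.exists
  exact ⟨(k : ℝ), (ENNReal.ofReal_le_iff_le_toReal (measure_ne_top μ _)).1 hk.le⟩

open Filter Topology in
lemma aux_distFun_right (μ : Measure Ω) [IsProbabilityMeasure μ] {X : Ω → ℝ}
    (hXm : Measurable X) {q u : ℝ} (h : ∀ k : ℕ, u ≤ distFun μ X (q + 1 / ((k : ℝ) + 1))) :
    u ≤ distFun μ X q := by
  have hseq : Tendsto (fun k : ℕ => q + 1 / ((k : ℝ) + 1)) atTop (𝓝 q) := by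
    simpa using tendsto_const_nhds.add (tendsto_one_div_add_atTop_nhds_zero_nat (𝕜 := ℝ))
  have hset : (⋂ k : ℕ, {ω | X ω ≤ q + 1 / ((k : ℝ) + 1)}) = {ω | X ω ≤ q} := by
    ext ω
    simp only [Set.mem_iInter, Set.mem_setOf_eq]
    constructor
    · intro hω
      exact ge_of_tendsto' hseq hω
    · intro hω k
      have hpos : (0 : ℝ) < 1 / ((k : ℝ) + 1) := by positivity
      linarith
  have hanti : Antitone fun k : ℕ => {ω | X ω ≤ q + 1 / ((k : ℝ) + 1)} := by
    intro k k' hkk' ω (hω : X ω ≤ q + 1 / ((k' : ℝ) + 1))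
    refine hω.trans (add_le_add_right ?_ q)
    exact one_div_le_one_div_of_le (by positivity)
      (by exact_mod_cast add_le_add_left (Nat.cast_le.2 hkk') 1)
  have ht := tendsto_measure_iInter_atTop (μ := μ)
    (s := fun k : ℕ => {ω | X ω ≤ q + 1 / ((k : ℝ) + 1)})
    (fun k => ((hXm measurableSet_Iic :
      MeasurableSet {ω | X ω ≤ q + 1 / ((k : ℝ) + 1)})).nullMeasurableSet)
    hanti ⟨0, measure_ne_top μ _⟩
  rw [hset] at ht
  have hle : ENNReal.ofReal u ≤ μ {ω | X ω ≤ q} :=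
    ge_of_tendsto' ht fun k =>
      (ENNReal.ofReal_le_iff_le_toReal (measure_ne_top μ _)).2 (h k)
  exact (ENNReal.ofReal_le_iff_le_toReal (measure_ne_top μ _)).1 hle

/-- Left-continuous quantile function, set to `0` outside `(0,1)`. -/
def quantFn (F : ℝ → ℝ) (u : ℝ) : ℝ := if 0 < u ∧ u < 1 then sInf {x | u ≤ F x} else 0

lemma aux_bddBelow (μ : Measure Ω) [IsProbabilityMeasure μ] {X : Ω → ℝ}
    (hXm : Measurable X) {u : ℝ} (h0 : 0 < u) :
    BddBelow {y | u ≤ distFun μ X y} := by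
  obtain ⟨x₀, hx₀⟩ := aux_exists_distFun_lt μ hXm h0
  refine ⟨x₀, fun y hy => le_of_not_gt fun hc => ?_⟩
  exact absurd (le_trans hy (aux_distFun_mono μ X hc.le)) (not_le.2 hx₀)

lemma aux_quant_le_iff (μ : Measure Ω) [IsProbabilityMeasure μ] {X : Ω → ℝ}
    (hXm : Measurable X) {u : ℝ} (h0 : 0 < u) (h1 : u < 1) (x : ℝ) :
    quantFn (distFun μ X) u ≤ x ↔ u ≤ distFun μ X x := by
  have hne : {y | u ≤ distFun μ X y}.Nonempty := aux_exists_le_distFun μ h1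
  have hbdd := aux_bddBelow μ hXm h0
  rw [quantFn, if_pos ⟨h0, h1⟩]
  constructor
  · intro hle
    have hq : u ≤ distFun μ X (sInf {y | u ≤ distFun μ X y}) := by
      apply aux_distFun_right μ hXm
      intro k
      have hpos : (0 : ℝ) < 1 / ((k : ℝ) + 1) := by positivity
      obtain ⟨a, ha, halt⟩ := Real.lt_sInf_add_pos hne hpos
      exact le_trans ha (aux_distFun_mono μ X halt.le)
    exact le_trans hq (aux_distFun_mono μ X hle)
  · intro hx
    exact csInf_le hbdd hx

lemma aux_quant_measurable (μ : Measure Ω) [IsProbabilityMeasure μ] {X : Ω → ℝ}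
    (hXm : Measurable X) : Measurable (quantFn (distFun μ X)) := by
  have hmonoOn : ∀ u v : ℝ, 0 < u → u ≤ v → v < 1 →
      quantFn (distFun μ X) u ≤ quantFn (distFun μ X) v := by
    intro u v hu huv hv
    rw [quantFn, quantFn, if_pos ⟨hu, lt_of_le_of_lt huv hv⟩, if_pos ⟨lt_of_lt_of_le hu huv, hv⟩]
    exact csInf_le_csInf (aux_bddBelow μ hXm hu) (aux_exists_le_distFun μ hv)
      fun y hy => le_trans huv hy
  apply measurable_of_Iic
  intro t
  have hOC : MeasurableSet (Set.Ioo (0:ℝ) 1 ∩ quantFn (distFun μ X) ⁻¹' Set.Iic t) := by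
    refine Set.OrdConnected.measurableSet ⟨?_⟩
    rintro a ⟨ha, hat⟩ c ⟨hc, hct⟩ b hb
    refine ⟨⟨lt_of_lt_of_le ha.1 hb.1, lt_of_le_of_lt hb.2 hc.2⟩, ?_⟩
    exact le_trans (hmonoOn b c (lt_of_lt_of_le ha.1 hb.1) hb.2 hc.2) hct
  by_cases h0 : (0:ℝ) ≤ t
  · have heq : quantFn (distFun μ X) ⁻¹' Set.Iic t
        = (Set.Ioo (0:ℝ) 1 ∩ quantFn (distFun μ X) ⁻¹' Set.Iic t) ∪ (Set.Ioo (0:ℝ) 1)ᶜ := by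
      ext u
      simp only [Set.mem_union, Set.mem_inter_iff, Set.mem_preimage, Set.mem_Iic,
        Set.mem_compl_iff, Set.mem_Ioo]
      constructor
      · intro h
        by_cases hu : 0 < u ∧ u < 1
        · exact Or.inl ⟨hu, h⟩
        · exact Or.inr hu
      · rintro (⟨_, h⟩ | h)
        · exact h
        · rw [quantFn, if_neg h]; exact h0
    rw [heq]
    exact hOC.union measurableSet_Ioo.compl
  · have heq : quantFn (distFun μ X) ⁻¹' Set.Iic t
        = Set.Ioo (0:ℝ) 1 ∩ quantFn (distFun μ X) ⁻¹' Set.Iic t := by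
      ext u
      simp only [Set.mem_inter_iff, Set.mem_preimage, Set.mem_Iic, Set.mem_Ioo]
      constructor
      · intro h
        by_cases hu : 0 < u ∧ u < 1
        · exact ⟨hu, h⟩
        · rw [quantFn, if_neg hu] at h
          exact absurd h h0
      · exact fun h => h.2
    rw [heq]
    exact hOC

lemma aux_quant_mono_of_le (μ : Measure Ω) (ν : Measure Ω') [IsProbabilityMeasure μ]
    [IsProbabilityMeasure ν] {X : Ω → ℝ} {Y : Ω' → ℝ} (hXm : Measurable X)
    (hle : ∀ x, distFun ν Y x ≤ distFun μ X x) {u : ℝ} (h0 : 0 < u) (h1 : u < 1) :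
    quantFn (distFun μ X) u ≤ quantFn (distFun ν Y) u := by
  rw [quantFn, quantFn, if_pos ⟨h0, h1⟩, if_pos ⟨h0, h1⟩]
  exact csInf_le_csInf (aux_bddBelow μ hXm h0) (aux_exists_le_distFun ν h1)
    fun y hy => le_trans hy (hle y)

lemma aux_distFun_le_st (μ : Measure Ω) (ν : Measure Ω') [IsProbabilityMeasure μ]
    [IsProbabilityMeasure ν] {X : Ω → ℝ} {Y : Ω' → ℝ} (hXm : Measurable X)
    (hYm : Measurable Y) (h : le_st μ X ν Y) (x : ℝ) :
    distFun ν Y x ≤ distFun μ X x := by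
  set f : ℝ → ℝ := fun s => if x < s then 1 else 0 with hfdef
  have hfmono : Monotone f := by
    intro a b hab
    simp only [hfdef]
    split_ifs with h1 h2
    · exact le_refl _
    · exact absurd (lt_of_lt_of_le h1 hab) h2
    · norm_num
    · exact le_refl _
  have hXind : (fun ω => f (X ω)) = Set.indicator {ω | x < X ω} (fun _ => (1:ℝ)) := by
    ext ω
    simp [hfdef, Set.indicator_apply, Set.mem_setOf_eq]
  have hYind : (fun ω' => f (Y ω')) = Set.indicator {ω' | x < Y ω'} (fun _ => (1:ℝ)) := by
    ext ω'
    simp [hfdef, Set.indicator_apply, Set.mem_setOf_eq]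
  have hXset : MeasurableSet {ω | x < X ω} := hXm measurableSet_Ioi
  have hYset : MeasurableSet {ω' | x < Y ω'} := hYm measurableSet_Ioi
  have hXint : Integrable (fun ω => f (X ω)) μ := by
    rw [hXind]
    exact (integrable_indicator_iff hXset).2 (integrableOn_const (measure_ne_top μ _))
  have hYint : Integrable (fun ω' => f (Y ω')) ν := by
    rw [hYind]
    exact (integrable_indicator_iff hYset).2 (integrableOn_const (measure_ne_top ν _))
  have hint := h f hfmono hXint hYint
  rw [hXind, hYind, integral_indicator_const (1:ℝ) hXset,
    integral_indicator_const (1:ℝ) hYset] at hint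
  simp only [smul_eq_mul, mul_one, measureReal_def] at hint
  have hXc : (μ {ω | X ω ≤ x}).toReal + (μ {ω | x < X ω}).toReal = 1 := by
    have hcompl : {ω | x < X ω} = {ω | X ω ≤ x}ᶜ := by
      ext ω; simp [not_le]
    have hms : MeasurableSet {ω | X ω ≤ x} := hXm measurableSet_Iic
    rw [← ENNReal.toReal_add (measure_ne_top μ _) (measure_ne_top μ _), hcompl,
      measure_add_measure_compl hms, measure_univ, ENNReal.toReal_one]
  have hYc : (ν {ω' | Y ω' ≤ x}).toReal + (ν {ω' | x < Y ω'}).toReal = 1 := by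
    have hcompl : {ω' | x < Y ω'} = {ω' | Y ω' ≤ x}ᶜ := by
      ext ω'; simp [not_le]
    have hms : MeasurableSet {ω' | Y ω' ≤ x} := hYm measurableSet_Iic
    rw [← ENNReal.toReal_add (measure_ne_top ν _) (measure_ne_top ν _), hcompl,
      measure_add_measure_compl hms, measure_univ, ENNReal.toReal_one]
  rw [distFun, distFun]
  linarith

lemma aux_measure_ext_orthant {n : ℕ} (P Q : Measure (Fin n → ℝ))
    [IsProbabilityMeasure P] [IsProbabilityMeasure Q]
    (h : ∀ x : Fin n → ℝ, P {u | ∀ i, u i ≤ x i} = Q {u | ∀ i, u i ≤ x i}) : P = Q := by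
  have hspan : ∀ _i : Fin n, IsCountablySpanning (Set.range (Set.Iic : ℝ → Set ℝ)) := by
    intro _
    refine ⟨fun k => Set.Iic (k : ℝ), fun k => Set.mem_range_self _, ?_⟩
    ext y
    simp only [Set.mem_iUnion, Set.mem_Iic, Set.mem_univ, iff_true]
    exact exists_nat_ge y
  have hgen : (inferInstance : MeasurableSpace (Fin n → ℝ)) =
      MeasurableSpace.generateFrom
        (Set.pi Set.univ '' Set.pi Set.univ fun _ : Fin n => Set.range (Set.Iic : ℝ → Set ℝ)) := by
    refine (generateFrom_eq_pi (fun _ => ?_) hspan).symm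
    exact (borel_eq_generateFrom_Iic ℝ).symm.trans BorelSpace.measurable_eq.symm
  refine ext_of_generate_finite _ hgen (IsPiSystem.pi fun _ => ?_) ?_ (by simp)
  · rintro _ ⟨a, rfl⟩ _ ⟨b, rfl⟩ _
    exact ⟨a ⊓ b, (Set.Iic_inter_Iic).symm⟩
  · rintro _ ⟨t, ht, rfl⟩
    choose x hx using fun i => ht i (Set.mem_univ i)
    have hset : Set.pi Set.univ t = {u : Fin n → ℝ | ∀ i, u i ≤ x i} := by
      ext u
      simp only [Set.mem_pi, Set.mem_univ, forall_true_left, Set.mem_setOf_eq]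
      refine forall_congr' fun i => ?_
      rw [← hx i, Set.mem_Iic]
    rw [hset]
    exact h x

lemma aux_ae_Ioo {n : ℕ} (νC : Measure (Fin n → ℝ)) [IsProbabilityMeasure νC]
    (hU : uniformMarginals νC) : ∀ᵐ u ∂νC, ∀ i, u i ∈ Set.Ioo (0:ℝ) 1 := by
  rw [MeasureTheory.ae_all_iff]
  intro i
  rw [MeasureTheory.ae_iff]
  have hpre : {u : Fin n → ℝ | ¬ u i ∈ Set.Ioo (0:ℝ) 1}
      = (fun u : Fin n → ℝ => u i) ⁻¹' (Set.Ioo (0:ℝ) 1)ᶜ := rfl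
  rw [hpre, ← Measure.map_apply (measurable_pi_apply i) measurableSet_Ioo.compl, hU i,
    Measure.restrict_apply measurableSet_Ioo.compl]
  refine measure_mono_null (fun y hy => ?_) (?_ : volume ({0, 1} : Set ℝ) = 0)
  · obtain ⟨hy1, hy2⟩ := hy
    simp only [Set.mem_compl_iff, Set.mem_Ioo, not_and, not_lt] at hy1
    rcases eq_or_lt_of_le hy2.1 with h0 | h0
    · exact Or.inl h0.symm
    · exact Or.inr (le_antisymm hy2.2 (hy1 h0))
  · rw [Set.insert_eq]
    exact measure_union_null Real.volume_singleton Real.volume_singleton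

lemma aux_map_quant_eq (μ : Measure Ω) [IsProbabilityMeasure μ]
    {n : ℕ} (X : Fin n → Ω → ℝ) (hXm : ∀ i, Measurable (X i))
    (νC : Measure (Fin n → ℝ)) [IsProbabilityMeasure νC] (hU : uniformMarginals νC)
    (hC : ∀ x : Fin n → ℝ,
      (μ {ω | ∀ i, X i ω ≤ x i}).toReal
        = (νC {u | ∀ i, u i ≤ distFun μ (X i) (x i)}).toReal) :
    Measure.map (fun ω i => X i ω) μ
      = Measure.map (fun u i => quantFn (distFun μ (X i)) (u i)) νC := by
  have hXv : Measurable fun ω (i : Fin n) => X i ω := measurable_pi_lambda _ hXm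
  have hQv : Measurable fun (u : Fin n → ℝ) (i : Fin n) => quantFn (distFun μ (X i)) (u i) :=
    measurable_pi_lambda _ fun i => (aux_quant_measurable μ (hXm i)).comp (measurable_pi_apply i)
  haveI : IsProbabilityMeasure (Measure.map (fun ω i => X i ω) μ) :=
    Measure.isProbabilityMeasure_map hXv.aemeasurable
  haveI : IsProbabilityMeasure
      (Measure.map (fun u i => quantFn (distFun μ (X i)) (u i)) νC) :=
    Measure.isProbabilityMeasure_map hQv.aemeasurable
  apply aux_measure_ext_orthant
  intro x
  have hOrth : MeasurableSet {p : Fin n → ℝ | ∀ i, p i ≤ x i} := by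
    rw [Set.setOf_forall]
    exact MeasurableSet.iInter fun i => measurableSet_le (measurable_pi_apply i) measurable_const
  rw [Measure.map_apply hXv hOrth, Measure.map_apply hQv hOrth]
  have hsets : ((fun u (i : Fin n) => quantFn (distFun μ (X i)) (u i)) ⁻¹'
        {p : Fin n → ℝ | ∀ i, p i ≤ x i})
      =ᵐ[νC] {u : Fin n → ℝ | ∀ i, u i ≤ distFun μ (X i) (x i)} := by
    filter_upwards [aux_ae_Ioo νC hU] with u hu
    simp only [Set.mem_preimage, Set.mem_setOf_eq, eq_iff_iff]
    exact forall_congr' fun i => aux_quant_le_iff μ (hXm i) (hu i).1 (hu i).2 (x i)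
  rw [measure_congr hsets]
  refine (ENNReal.toReal_eq_toReal_iff' (measure_ne_top _ _) (measure_ne_top _ _)).1 ?_
  exact hC x

/-- common copula and componentwise `≤_st` imply `≤_st` of the sums. -/
theorem sum_le_st_of_common_copula
    {n : ℕ} (μ : Measure Ω) (ν : Measure Ω')
    [IsProbabilityMeasure μ] [IsProbabilityMeasure ν]
    (X : Fin n → Ω → ℝ) (Y : Fin n → Ω' → ℝ)
    (hXm : ∀ i, Measurable (X i)) (hYm : ∀ i, Measurable (Y i))
    (C : (Fin n → ℝ) → ℝ)
    (hX : HasCopula μ X C) (hY : HasCopula ν Y C)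
    (hst : ∀ i, le_st μ (X i) ν (Y i)) :
    le_st μ (fun ω => ∑ i, X i ω) ν (fun ω => ∑ i, Y i ω) := by
  intro f hf hfX hfY
  obtain ⟨⟨νC, hνP, hνU, hνF⟩, hXC⟩ := hX
  obtain ⟨-, hYC⟩ := hY
  haveI := hνP
  have hGF : ∀ i, ∀ x, distFun ν (Y i) x ≤ distFun μ (X i) x := fun i x =>
    aux_distFun_le_st μ ν (hXm i) (hYm i) (hst i) x
  have hCX : ∀ x : Fin n → ℝ, (μ {ω | ∀ i, X i ω ≤ x i}).toReal
      = (νC {u | ∀ i, u i ≤ distFun μ (X i) (x i)}).toReal := by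
    intro x
    have h1 := hXC x
    rw [jointCDF] at h1
    rw [h1]
    exact hνF _
  have hCY : ∀ x : Fin n → ℝ, (ν {ω | ∀ i, Y i ω ≤ x i}).toReal
      = (νC {u | ∀ i, u i ≤ distFun ν (Y i) (x i)}).toReal := by
    intro x
    have h1 := hYC x
    rw [jointCDF] at h1
    rw [h1]
    exact hνF _
  have hXlaw := aux_map_quant_eq μ X hXm νC hνU hCX
  have hYlaw := aux_map_quant_eq ν Y hYm νC hνU hCY
  have hfm : Measurable f := hf.measurable
  have hsum : Measurable fun p : Fin n → ℝ => ∑ i, p i :=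
    Finset.measurable_sum _ fun i _ => measurable_pi_apply i
  have hgm : Measurable fun p : Fin n → ℝ => f (∑ i, p i) := hfm.comp hsum
  have hXv : Measurable fun ω (i : Fin n) => X i ω := measurable_pi_lambda _ hXm
  have hYv : Measurable fun ω' (i : Fin n) => Y i ω' := measurable_pi_lambda _ hYm
  have hQXm : Measurable fun (u : Fin n → ℝ) (i : Fin n) => quantFn (distFun μ (X i)) (u i) :=
    measurable_pi_lambda _ fun i => (aux_quant_measurable μ (hXm i)).comp (measurable_pi_apply i)
  have hQYm : Measurable fun (u : Fin n → ℝ) (i : Fin n) => quantFn (distFun ν (Y i)) (u i) :=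
    measurable_pi_lambda _ fun i => (aux_quant_measurable ν (hYm i)).comp (measurable_pi_apply i)
  have hiX : Integrable (fun u : Fin n → ℝ => f (∑ i, quantFn (distFun μ (X i)) (u i))) νC := by
    have h2 : Integrable (fun p : Fin n → ℝ => f (∑ i, p i))
        (Measure.map (fun ω i => X i ω) μ) := by
      rw [integrable_map_measure hgm.aestronglyMeasurable hXv.aemeasurable]
      exact hfX
    rw [hXlaw, integrable_map_measure hgm.aestronglyMeasurable hQXm.aemeasurable] at h2
    exact h2
  have hiY : Integrable (fun u : Fin n → ℝ => f (∑ i, quantFn (distFun ν (Y i)) (u i))) νC := by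
    have h2 : Integrable (fun p : Fin n → ℝ => f (∑ i, p i))
        (Measure.map (fun ω' i => Y i ω') ν) := by
      rw [integrable_map_measure hgm.aestronglyMeasurable hYv.aemeasurable]
      exact hfY
    rw [hYlaw, integrable_map_measure hgm.aestronglyMeasurable hQYm.aemeasurable] at h2
    exact h2
  have hIX : ∫ ω, f (∑ i, X i ω) ∂μ
      = ∫ u, f (∑ i, quantFn (distFun μ (X i)) (u i)) ∂νC := by
    calc ∫ ω, f (∑ i, X i ω) ∂μ
        = ∫ p, f (∑ i, p i) ∂(Measure.map (fun ω i => X i ω) μ) :=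
          (integral_map hXv.aemeasurable hgm.aestronglyMeasurable).symm
      _ = ∫ p, f (∑ i, p i)
            ∂(Measure.map (fun u i => quantFn (distFun μ (X i)) (u i)) νC) := by rw [hXlaw]
      _ = ∫ u, f (∑ i, quantFn (distFun μ (X i)) (u i)) ∂νC :=
          integral_map hQXm.aemeasurable hgm.aestronglyMeasurable
  have hIY : ∫ ω', f (∑ i, Y i ω') ∂ν
      = ∫ u, f (∑ i, quantFn (distFun ν (Y i)) (u i)) ∂νC := by
    calc ∫ ω', f (∑ i, Y i ω') ∂ν
        = ∫ p, f (∑ i, p i) ∂(Measure.map (fun ω' i => Y i ω') ν) :=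
          (integral_map hYv.aemeasurable hgm.aestronglyMeasurable).symm
      _ = ∫ p, f (∑ i, p i)
            ∂(Measure.map (fun u i => quantFn (distFun ν (Y i)) (u i)) νC) := by rw [hYlaw]
      _ = ∫ u, f (∑ i, quantFn (distFun ν (Y i)) (u i)) ∂νC :=
          integral_map hQYm.aemeasurable hgm.aestronglyMeasurable
  have hmono : ∀ᵐ u ∂νC, f (∑ i, quantFn (distFun μ (X i)) (u i))
      ≤ f (∑ i, quantFn (distFun ν (Y i)) (u i)) := by
    filter_upwards [aux_ae_Ioo νC hνU] with u hu
    refine hf (Finset.sum_le_sum fun i _ => ?_)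
    exact aux_quant_mono_of_le μ ν (hXm i) (hGF i) (hu i).1 (hu i).2
  calc ∫ ω, f (∑ i, X i ω) ∂μ
      = ∫ u, f (∑ i, quantFn (distFun μ (X i)) (u i)) ∂νC := hIX
    _ ≤ ∫ u, f (∑ i, quantFn (distFun ν (Y i)) (u i)) ∂νC :=
        integral_mono_ae hiX hiY hmono
    _ = ∫ ω', f (∑ i, Y i ω') ∂ν := hIY.symm
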